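/- The quasi-shuffle product is associative: for all words u, v, w over the alphabet A, (u ∗ v) ∗ w = u ∗ (v ∗ w). -/

import Mathlib

open Finsupp

/-- Quasi-shuffle product of words over an alphabet `A`, with bracket `br : RA ⊗ RA → RA`
given on letters. -/
noncomputable def qsh {A : Type*} (br : A → A → (A →₀ ℝ)) : List A → List A → (List A →₀ ℝ)
  | [], v => Finsupp.single v 1
  | a :: u, [] => Finsupp.single (a :: u) 1
  | a :: u, b :: v =>
      Finsupp.mapDomain (a :: ·) (qsh br u (b :: v))
    + Finsupp.mapDomain (b :: ·) (qsh br (a :: u) v)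
    + (br a b).sum fun c r => r • Finsupp.mapDomain (c :: ·) (qsh br u v)
  termination_by u v => u.length + v.length

/-- Bilinear extension of the quasi-shuffle product to `R⟨A⟩`. -/
noncomputable def qshP {A : Type*} (br : A → A → (A →₀ ℝ)) (x y : List A →₀ ℝ) :
    List A →₀ ℝ :=
  x.sum fun u r => y.sum fun v s => (r * s) • qsh br u v

/-- The identity endomorphism (recorded by its action on basis words). -/
noncomputable def idE {A : Type*} : List A → (List A →₀ ℝ) := fun w => Finsupp.single w 1

/-- The unit `ν`: projection onto the empty word. -/
noncomputable def nuE {A : Type*} : List A → (List A →₀ ℝ) := fun w =>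
  match w with
  | [] => Finsupp.single ([] : List A) 1
  | _ :: _ => 0

/-- The augmented ideal projector `J = id - ν`. -/
noncomputable def JE {A : Type*} : List A → (List A →₀ ℝ) := fun w =>
  match w with
  | [] => 0
  | _ :: _ => Finsupp.single w 1

/-- Convolution product of endomorphisms: `(F ⋆ G)(w) = Σ_{uv = w} F(u) ∗ G(v)`. -/
noncomputable def conv {A : Type*} (br : A → A → (A →₀ ℝ))
    (F G : List A → (List A →₀ ℝ)) : List A → (List A →₀ ℝ) :=
  fun w => ∑ k ∈ Finset.range (w.length + 1), qshP br (F (w.take k)) (G (w.drop k))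

/-- Convolution powers, with `F^{⋆0} = ν`. -/
noncomputable def convPow {A : Type*} (br : A → A → (A →₀ ℝ))
    (F : List A → (List A →₀ ℝ)) : ℕ → List A → (List A →₀ ℝ)
  | 0 => nuE
  | k + 1 => conv br F (convPow br F k)

/-- The reversal map `|S|` extended linearly to `R⟨A⟩`. -/
noncomputable def revL {A : Type*} : (List A →₀ ℝ) → (List A →₀ ℝ) :=
  Finsupp.mapDomain List.reverse

/-- The sign reversal map `S : a₁⋯aₙ ↦ (-1)ⁿ aₙ⋯a₁`. -/
noncomputable def SE {A : Type*} : List A → (List A →₀ ℝ) := fun w =>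
  ((-1 : ℝ) ^ w.length) • Finsupp.single w.reverse 1

/-- Expectation map on words: `t^{|w|}/|w|!` on words from `{z}*`, zero otherwise. -/
noncomputable def Eword {A : Type*} [DecidableEq A] (z : A) (t : ℝ) (w : List A) : ℝ :=
  if ∀ a ∈ w, a = z then t ^ w.length / (Nat.factorial w.length) else 0

/-- Linear extension of the expectation map to `R⟨A⟩`. -/
noncomputable def Eext {A : Type*} [DecidableEq A] (z : A) (t : ℝ) (x : List A →₀ ℝ) : ℝ :=
  x.sum fun w r => r * Eword z t w

/-- Endomorphism inner product `⟨F,G⟩ = Σ_{u,v} E(F(u) ∗ G(v)) (u,v)`, restricted to a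
finite set `W` of words, with coefficient matrix `V`. -/
noncomputable def innerE {A : Type*} [DecidableEq A] (br : A → A → (A →₀ ℝ)) (z : A) (t : ℝ)
    (V : List A → List A → ℝ) (W : Finset (List A))
    (F G : List A → (List A →₀ ℝ)) : ℝ :=
  ∑ u ∈ W, ∑ v ∈ W, Eext z t (qshP br (F u) (G v)) * V u v

/-- Projection of an element of `R⟨A⟩` onto words satisfying `p`. -/
noncomputable def projP {A : Type*} (p : List A → Prop) (x : List A →₀ ℝ) : List A →₀ ℝ :=
  haveI := Classical.decPred p
  Finsupp.filter p x

/-- Composition of the grade-`n` (word-length) projection with an endomorphism. -/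
noncomputable def projLen {A : Type*} (n : ℕ) (F : List A → (List A →₀ ℝ)) :
    List A → (List A →₀ ℝ) :=
  fun w => projP (fun u => u.length = n) (F w)

/-- Extension of the bracket to a bilinear product on `RA`. -/
noncomputable def brExt {A : Type*} (br : A → A → (A →₀ ℝ)) (x y : A →₀ ℝ) : A →₀ ℝ :=
  x.sum fun a r => y.sum fun b s => (r * s) • br a b

/-- The endomorphism `½(id - S)` (antisymmetric sign reverse). -/
noncomputable def halfMinus {A : Type*} : List A → (List A →₀ ℝ) :=
  fun w => (2⁻¹ : ℝ) • (idE w - SE w)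

/-- The endomorphism `½(id + S)` (symmetric sign reverse). -/
noncomputable def halfPlus {A : Type*} : List A → (List A →₀ ℝ) :=
  fun w => (2⁻¹ : ℝ) • (idE w + SE w)


section QshAssocAux

variable {A : Type*} (br : A → A → (A →₀ ℝ))

lemma qsh_nil_left (v : List A) : qsh br [] v = Finsupp.single v 1 := by rw [qsh]

lemma qsh_nil_right (u : List A) : qsh br u [] = Finsupp.single u 1 := by
  cases u <;> rw [qsh]

lemma qsh_cons_cons (a b : A) (u v : List A) :
    qsh br (a :: u) (b :: v) =
      Finsupp.mapDomain (a :: ·) (qsh br u (b :: v))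
    + Finsupp.mapDomain (b :: ·) (qsh br (a :: u) v)
    + (br a b).sum fun c r => r • Finsupp.mapDomain (c :: ·) (qsh br u v) := by
  rw [qsh]

lemma qshP_zero_left (y : List A →₀ ℝ) : qshP br 0 y = 0 := by
  simp [qshP]

lemma qshP_zero_right (x : List A →₀ ℝ) : qshP br x 0 = 0 := by
  simp [qshP]

lemma qshP_add_left (x x' y : List A →₀ ℝ) :
    qshP br (x + x') y = qshP br x y + qshP br x' y := by
  classical
  unfold qshP
  apply Finsupp.sum_add_index
  · intro u _; simp
  · intro u _ r r'
    rw [← Finsupp.sum_add]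
    exact Finsupp.sum_congr fun v _ => by rw [add_mul, add_smul]

lemma qshP_smul_left (t : ℝ) (x y : List A →₀ ℝ) :
    qshP br (t • x) y = t • qshP br x y := by
  unfold qshP
  rw [Finsupp.sum_smul_index (fun u => by simp), Finsupp.smul_sum]
  exact Finsupp.sum_congr fun u _ => by
    rw [Finsupp.smul_sum]
    exact Finsupp.sum_congr fun v _ => by rw [smul_smul, mul_assoc]

lemma qshP_add_right (x y y' : List A →₀ ℝ) :
    qshP br x (y + y') = qshP br x y + qshP br x y' := by
  classical
  unfold qshP
  rw [← Finsupp.sum_add]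
  exact Finsupp.sum_congr fun u _ => by
    apply Finsupp.sum_add_index
    · intro v _; simp
    · intro v _ s s'; rw [mul_add, add_smul]

lemma qshP_smul_right (t : ℝ) (x y : List A →₀ ℝ) :
    qshP br x (t • y) = t • qshP br x y := by
  unfold qshP
  rw [Finsupp.smul_sum]
  exact Finsupp.sum_congr fun u _ => by
    rw [Finsupp.sum_smul_index (fun v => by simp), Finsupp.smul_sum]
    exact Finsupp.sum_congr fun v _ => by rw [smul_smul, mul_left_comm]

lemma qshP_single_single (u v : List A) :
    qshP br (Finsupp.single u 1) (Finsupp.single v 1) = qsh br u v := by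
  unfold qshP
  rw [Finsupp.sum_single_index, Finsupp.sum_single_index] <;> simp

lemma qshP_single (u v : List A) (t s : ℝ) :
    qshP br (Finsupp.single u t) (Finsupp.single v s) = (t * s) • qsh br u v := by
  unfold qshP
  rw [Finsupp.sum_single_index (by simp), Finsupp.sum_single_index (by simp)]

lemma qshP_finset_sum_left {ι : Type*} (s : Finset ι) (g : ι → (List A →₀ ℝ)) (y : List A →₀ ℝ) :
    qshP br (∑ i ∈ s, g i) y = ∑ i ∈ s, qshP br (g i) y := by
  classical
  induction s using Finset.induction with
  | empty => simp [qshP_zero_left]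
  | insert _ _ hi => simp_all [Finset.sum_insert hi, qshP_add_left]

lemma qshP_sum_left {ι : Type*} (h : ι →₀ ℝ) (g : ι → ℝ → (List A →₀ ℝ)) (y : List A →₀ ℝ) :
    qshP br (h.sum g) y = h.sum fun i r => qshP br (g i r) y := by
  rw [Finsupp.sum, Finsupp.sum, qshP_finset_sum_left]

lemma qshP_finset_sum_right {ι : Type*} (s : Finset ι) (g : ι → (List A →₀ ℝ)) (x : List A →₀ ℝ) :
    qshP br x (∑ i ∈ s, g i) = ∑ i ∈ s, qshP br x (g i) := by
  classical
  induction s using Finset.induction with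
  | empty => simp [qshP_zero_right]
  | insert _ _ hi => simp_all [Finset.sum_insert hi, qshP_add_right]

lemma qshP_sum_right {ι : Type*} (h : ι →₀ ℝ) (g : ι → ℝ → (List A →₀ ℝ)) (x : List A →₀ ℝ) :
    qshP br x (h.sum g) = h.sum fun i r => qshP br x (g i r) := by
  rw [Finsupp.sum, Finsupp.sum, qshP_finset_sum_right]

lemma qshP_nil_right (x : List A →₀ ℝ) : qshP br x (Finsupp.single ([] : List A) 1) = x := by
  unfold qshP
  calc x.sum (fun u r => (Finsupp.single ([] : List A) 1).sum fun v s => (r * s) • qsh br u v)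
      = x.sum fun u r => Finsupp.single u r :=
        Finsupp.sum_congr fun u _ => by
          rw [Finsupp.sum_single_index (by simp)]
          simp [qsh_nil_right, Finsupp.smul_single]
    _ = x := Finsupp.sum_single x

lemma qshP_nil_left (y : List A →₀ ℝ) : qshP br (Finsupp.single ([] : List A) 1) y = y := by
  unfold qshP
  rw [Finsupp.sum_single_index (by simp)]
  calc y.sum (fun v s => ((1:ℝ) * s) • qsh br [] v)
      = y.sum fun v s => Finsupp.single v s :=
        Finsupp.sum_congr fun v _ => by rw [qsh]; simp [Finsupp.smul_single]
    _ = y := Finsupp.sum_single y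

lemma qshP_mapDomain_cons (a c : A) (x y : List A →₀ ℝ) :
    qshP br (Finsupp.mapDomain (a :: ·) x) (Finsupp.mapDomain (c :: ·) y)
      = Finsupp.mapDomain (a :: ·) (qshP br x (Finsupp.mapDomain (c :: ·) y))
      + Finsupp.mapDomain (c :: ·) (qshP br (Finsupp.mapDomain (a :: ·) x) y)
      + (br a c).sum fun d r => r • Finsupp.mapDomain (d :: ·) (qshP br x y) := by
  induction x using Finsupp.induction_linear with
  | zero => simp [qshP_zero_left, qshP_zero_right]
  | add x1 x2 ih1 ih2 =>
      rw [Finsupp.mapDomain_add, qshP_add_left, ih1, ih2]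
      simp only [qshP_add_left, Finsupp.mapDomain_add]
      simp only [smul_add]
      rw [Finsupp.sum_add]
      abel
  | single s t =>
      induction y using Finsupp.induction_linear with
      | zero => simp [qshP_zero_left, qshP_zero_right]
      | add y1 y2 ih1 ih2 =>
          rw [Finsupp.mapDomain_add, qshP_add_right, ih1, ih2]
          simp only [qshP_add_right, Finsupp.mapDomain_add]
          simp only [smul_add]
          rw [Finsupp.sum_add]
          abel
      | single v s' =>
          rw [Finsupp.mapDomain_single, Finsupp.mapDomain_single,
            qshP_single, qshP_single, qshP_single, qshP_single,
            qsh_cons_cons, smul_add, smul_add, Finsupp.mapDomain_smul, Finsupp.mapDomain_smul,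
            Finsupp.smul_sum]
          congr 1
          exact Finsupp.sum_congr fun d _ => by rw [Finsupp.mapDomain_smul, smul_comm]

lemma brExt_sum_expand (x : A →₀ ℝ) (k : A → (A →₀ ℝ)) (G : A → (List A →₀ ℝ)) :
    ((x.sum fun e r => r • k e).sum fun d ρ => ρ • G d)
      = x.sum fun e r => r • ((k e).sum fun d ρ => ρ • G d) := by
  classical
  rw [Finsupp.sum_sum_index (fun d => by simp) (fun d ρ1 ρ2 => add_smul ρ1 ρ2 (G d))]
  exact Finsupp.sum_congr fun e _ => by
    rw [Finsupp.sum_smul_index (fun d => by simp), Finsupp.smul_sum]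
    exact Finsupp.sum_congr fun d _ => by rw [mul_smul]

lemma brExt_single_right (x : A →₀ ℝ) (c : A) :
    brExt br x (Finsupp.single c 1) = x.sum fun e r => r • br e c := by
  unfold brExt
  exact Finsupp.sum_congr fun e _ => by
    rw [Finsupp.sum_single_index (by simp), mul_one]

lemma brExt_single_left (a : A) (y : A →₀ ℝ) :
    brExt br (Finsupp.single a 1) y = y.sum fun e s => s • br a e := by
  unfold brExt
  rw [Finsupp.sum_single_index (by simp)]
  exact Finsupp.sum_congr fun e _ => by rw [one_mul]


lemma mapDomain_fsum {ι : Type*} (f : List A → List A) (s : ι →₀ ℝ)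
    (g : ι → ℝ → (List A →₀ ℝ)) :
    Finsupp.mapDomain f (s.sum g) = s.sum fun i r => Finsupp.mapDomain f (g i r) :=
  map_finsuppSum (Finsupp.mapDomain.addMonoidHom f) s g

lemma dbl_swap (hassoc : ∀ a b c : A, brExt br (br a b) (Finsupp.single c 1)
        = brExt br (Finsupp.single a 1) (br b c)) (a b c : A) (Y : List A →₀ ℝ) :
    ((br a b).sum fun e r => r • ((br e c).sum fun d ρ => ρ • Finsupp.mapDomain (d :: ·) Y))
      = (br b c).sum fun e r => r • ((br a e).sum fun d ρ => ρ • Finsupp.mapDomain (d :: ·) Y) := by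
  rw [← brExt_sum_expand (br a b) (fun e => br e c) (fun d => Finsupp.mapDomain (d :: ·) Y),
    ← brExt_sum_expand (br b c) (fun e => br a e) (fun d => Finsupp.mapDomain (d :: ·) Y),
    ← brExt_single_right, ← brExt_single_left, hassoc]

lemma main_ind (hassoc : ∀ a b c : A, brExt br (br a b) (Finsupp.single c 1)
        = brExt br (Finsupp.single a 1) (br b c)) :
    ∀ (n : ℕ) (u v w : List A), u.length + v.length + w.length ≤ n →
    qshP br (qsh br u v) (Finsupp.single w 1)
      = qshP br (Finsupp.single u 1) (qsh br v w) := by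
  intro n
  induction n with
  | zero =>
      intro u v w h
      match u, v, w with
      | [], v, w => rw [qsh_nil_left, qshP_single_single, qshP_nil_left]
      | a :: u', v, w => simp [List.length_cons] at h
  | succ n ih =>
      intro u v w h
      match u, v, w with
      | [], v, w => rw [qsh_nil_left, qshP_single_single, qshP_nil_left]
      | a :: u', [], w => rw [qsh_nil_right, qsh_nil_left]
      | a :: u', b :: v', [] => rw [qsh_nil_right, qshP_nil_right, qshP_single_single]
      | a :: u', b :: v', c :: w' =>
          simp only [List.length_cons] at h
          have I1 := ih u' (b :: v') (c :: w') (by simp only [List.length_cons]; omega)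
          have I2 := ih u' (b :: v') w' (by simp only [List.length_cons]; omega)
          have I3 := ih (a :: u') v' (c :: w') (by simp only [List.length_cons]; omega)
          have I4 := ih (a :: u') v' w' (by simp only [List.length_cons]; omega)
          have I5 := ih u' v' (c :: w') (by simp only [List.length_cons]; omega)
          have I6 := ih u' v' w' (by omega)
          have I7 := ih (a :: u') (b :: v') w' (by simp only [List.length_cons]; omega)
          have hfw : (Finsupp.single (c :: w') 1 : List A →₀ ℝ)
              = Finsupp.mapDomain (c :: ·) (Finsupp.single w' 1) := by
            rw [Finsupp.mapDomain_single]
          have hfu : (Finsupp.single (a :: u') 1 : List A →₀ ℝ)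
              = Finsupp.mapDomain (a :: ·) (Finsupp.single u' 1) := by
            rw [Finsupp.mapDomain_single]
          rw [qsh_cons_cons br a b u' v', qshP_add_left, qshP_add_left, qshP_sum_left]
          simp only [qshP_smul_left]
          rw [hfw]
          simp only [qshP_mapDomain_cons]
          simp only [Finsupp.mapDomain_single]
          simp only [smul_add]
          rw [Finsupp.sum_add, Finsupp.sum_add]
          simp only [I1, I2, I3, I4, I5, I6]
          -- expand RHS
          rw [qsh_cons_cons br b c v' w']
          simp only [qshP_add_right, qshP_sum_right, qshP_smul_right]
          rw [hfu]
          simp only [qshP_mapDomain_cons]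
          simp only [Finsupp.mapDomain_single]
          simp only [smul_add]
          simp only [Finsupp.sum_add]
          simp only [Finsupp.mapDomain_add, mapDomain_fsum, Finsupp.mapDomain_smul]
          have hmid : Finsupp.mapDomain (c :: ·)
                (qshP br (Finsupp.single (a :: u') 1) (qsh br (b :: v') w'))
              = Finsupp.mapDomain (c :: ·)
                  (qshP br (Finsupp.mapDomain (a :: ·) (qsh br u' (b :: v'))) (Finsupp.single w' 1))
              + Finsupp.mapDomain (c :: ·)
                  (qshP br (Finsupp.mapDomain (b :: ·) (qsh br (a :: u') v')) (Finsupp.single w' 1))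
              + (br a b).sum fun i r => r • Finsupp.mapDomain (c :: ·)
                  (qshP br (Finsupp.mapDomain (i :: ·) (qsh br u' v')) (Finsupp.single w' 1)) := by
            rw [← I7, qsh_cons_cons br a b u' v', qshP_add_left, qshP_add_left, qshP_sum_left]
            simp only [qshP_smul_left, Finsupp.mapDomain_add, mapDomain_fsum, Finsupp.mapDomain_smul]
          rw [hmid, dbl_swap br hassoc a b c (qshP br (Finsupp.single u' 1) (qsh br v' w'))]
          abel

end QshAssocAux

/-- the quasi-shuffle product is associative (for a commutative associative
bracket). -/
theorem qsh_assoc {A : Type*} (br : A → A → (A →₀ ℝ))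
    (hcomm : ∀ a b : A, br a b = br b a)
    (hassoc : ∀ a b c : A, brExt br (br a b) (Finsupp.single c 1)
        = brExt br (Finsupp.single a 1) (br b c))
    (u v w : List A) :
    qshP br (qsh br u v) (Finsupp.single w 1)
      = qshP br (Finsupp.single u 1) (qsh br v w) :=
  main_ind br hassoc (u.length + v.length + w.length) u v w le_rfl
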